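/- (Simon's factorization forest theorem) For every finite semigroup S there exists a number h_S such that every nonempty sequence s₁, ..., s_n ∈ S admits a factorization tree of height at most h_S in which every internal node is either binary or idempotent (all of its children carry the same idempotent value e with ee = e). -/

import Mathlib

/-- `FactTreeLe l v h` says that the sequence `l` of semigroup elements admits a
factorization tree of height at most `h` whose root value is `v` (leaves, read left to
right, are the sequence `l`; every internal node is either binary or idempotent, and its
value is the product of the values of its children). -/
inductive FactTreeLe {S : Type*} [Semigroup S] : List S → S → ℕ → Prop
  | leaf (s : S) (n : ℕ) : FactTreeLe [s] s n
  | node {l₁ l₂ : List S} {v₁ v₂ : S} {n : ℕ} :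
      FactTreeLe l₁ v₁ n → FactTreeLe l₂ v₂ n →
      FactTreeLe (l₁ ++ l₂) (v₁ * v₂) (n + 1)
  | idem {e : S} (he : e * e = e) {n : ℕ} (children : List (List S))
      (hlen : 2 ≤ children.length)
      (hch : ∀ l ∈ children, FactTreeLe l e n) :
      FactTreeLe children.flatten e (n + 1)

namespace SimonAux
section Green
variable {G : Type*} [Monoid G]

def leR (x y : G) : Prop := ∃ u, x = y * u
def leL (x y : G) : Prop := ∃ u, x = u * y
def leJ (x y : G) : Prop := ∃ u v, x = u * y * v
def eqJ (x y : G) : Prop := leJ x y ∧ leJ y x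

theorem leR.refl (x : G) : leR x x := ⟨1, (mul_one x).symm⟩
theorem leL.refl (x : G) : leL x x := ⟨1, (one_mul x).symm⟩
theorem leJ.refl (x : G) : leJ x x := ⟨1, 1, by simp⟩
theorem eqJ.refl (x : G) : eqJ x x := ⟨leJ.refl x, leJ.refl x⟩
theorem eqJ.symm {x y : G} (h : eqJ x y) : eqJ y x := ⟨h.2, h.1⟩

theorem leJ.trans {x y z : G} (h : leJ x y) (h' : leJ y z) : leJ x z := by
  obtain ⟨u, v, rfl⟩ := h; obtain ⟨a, b, rfl⟩ := h'
  exact ⟨u * a, b * v, by simp [mul_assoc]⟩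

theorem eqJ.trans {x y z : G} (h : eqJ x y) (h' : eqJ y z) : eqJ x z :=
  ⟨h.1.trans h'.1, h'.2.trans h.2⟩

theorem leR.leJ {x y : G} (h : leR x y) : leJ x y := by
  obtain ⟨u, rfl⟩ := h; exact ⟨1, u, by simp⟩

theorem leL.leJ {x y : G} (h : leL x y) : leJ x y := by
  obtain ⟨u, rfl⟩ := h; exact ⟨u, 1, by simp⟩

theorem mul_leR (x y : G) : leR (x * y) x := ⟨y, rfl⟩
theorem mul_leL (x y : G) : leL (x * y) y := ⟨x, rfl⟩

theorem pow_shift {x : G} {d : ℕ} (hd : 0 < d) (i : ℕ) (h : x ^ i = x ^ (i + d)) :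
    ∀ t, x ^ i = x ^ (i + t * d) := by
  intro t
  induction t with
  | zero => simp
  | succ t ih =>
      have h2 : x ^ (i + (t+1) * d) = x ^ (i + t * d) * x ^ d := by
        rw [← pow_add]; congr 1; ring
      rw [h2, ← ih]
      calc x ^ i = x ^ (i + d) := h
        _ = x ^ i * x ^ d := by rw [← pow_add]

theorem exists_idem_pow [Finite G] (x : G) : ∃ k, 0 < k ∧ x ^ k * x ^ k = x ^ k := by
  obtain ⟨i, j, hne, hij⟩ := Finite.exists_ne_map_eq_of_infinite (fun n : ℕ => x ^ n)
  wlog hlt : i < j generalizing i j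
  · exact this j i hne.symm hij.symm (by omega)
  set d := j - i with hd
  have hd0 : 0 < d := by omega
  have hbase : x ^ i = x ^ (i + d) := by rw [hd]; convert hij using 2; omega
  refine ⟨(i + 1) * d, by positivity, ?_⟩
  have h1 : ∀ m, i ≤ m → ∀ t, x ^ m = x ^ (m + t * d) := by
    intro m hm
    have hstep : x ^ m = x ^ (m + d) := by
      calc x ^ m = x ^ i * x ^ (m - i) := by rw [← pow_add]; congr 1; omega
        _ = x ^ (i + d) * x ^ (m - i) := by rw [hbase]
        _ = x ^ (m + d) := by rw [← pow_add]; congr 1; omega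
    exact pow_shift hd0 m hstep
  rw [← pow_add]
  have := h1 ((i+1)*d) (by nlinarith) (i+1)
  rw [← this]

theorem stabR [Finite G] {a b : G} (h1 : leR b a) (h2 : leJ a b) : leR a b := by
  obtain ⟨u, rfl⟩ := h1
  obtain ⟨v, w, hv⟩ := h2
  have hv' : a = v * a * (u * w) :=
    calc a = v * (a * u) * w := hv
      _ = v * a * (u * w) := by simp [mul_assoc]
  have key : ∀ k, a = v ^ k * a * (u * w) ^ k := by
    intro k
    induction k with
    | zero => simp
    | succ k ih =>
        calc a = v * a * (u * w) := hv'
          _ = v * (v ^ k * a * (u * w) ^ k) * (u * w) := by rw [← ih]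
          _ = v ^ (k+1) * a * (u * w) ^ (k+1) := by
              rw [pow_succ', pow_succ]; simp [mul_assoc]
  obtain ⟨k, hk0, hke⟩ := exists_idem_pow (u * w)
  have h3 : a = a * (u * w) ^ k := by
    conv_lhs => rw [key k]
    conv_rhs => rw [key k]
    rw [mul_assoc (v^k * a), hke]
  refine ⟨w * (u * w) ^ (k - 1), ?_⟩
  calc a = a * (u*w)^k := h3
    _ = a * ((u*w) * (u*w)^(k-1)) := by rw [← pow_succ']; congr 2; omega
    _ = a * u * (w * (u*w)^(k-1)) := by simp [mul_assoc]

theorem stabL [Finite G] {a b : G} (h1 : leL b a) (h2 : leJ a b) : leL a b := by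
  obtain ⟨u, rfl⟩ := h1
  obtain ⟨v, w, hv⟩ := h2
  have hv' : a = (v * u) * a * w :=
    calc a = v * (u * a) * w := hv
      _ = (v * u) * a * w := by simp [mul_assoc]
  have key : ∀ k, a = (v * u) ^ k * a * w ^ k := by
    intro k
    induction k with
    | zero => simp
    | succ k ih =>
        calc a = (v * u) * a * w := hv'
          _ = (v * u) * ((v*u) ^ k * a * w ^ k) * w := by rw [← ih]
          _ = (v*u) ^ (k+1) * a * w ^ (k+1) := by
              rw [pow_succ', pow_succ]; simp [mul_assoc]
  obtain ⟨k, hk0, hke⟩ := exists_idem_pow (v * u)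
  have h3 : (v*u)^k * a = a := by
    conv_rhs => rw [key k]
    conv_lhs => rw [key k]
    rw [← mul_assoc, ← mul_assoc, hke]
  refine ⟨(v*u)^(k-1) * v, ?_⟩
  calc a = (v*u)^k * a := h3.symm
    _ = ((v*u)^(k-1) * (v*u)) * a := by rw [← pow_succ]; congr 2; omega
    _ = ((v*u)^(k-1) * v) * (u * a) := by simp [mul_assoc]
end Green
end SimonAux
section Trees
open SimonAux
open List
variable {S : Type*} [Semigroup S]

/-- value of a list in `WithOne S` -/
def phi (l : List S) : WithOne S := (l.map (fun s => (s : WithOne S))).prod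

@[simp] theorem phi_nil : phi ([] : List S) = 1 := rfl
@[simp] theorem phi_singleton (a : S) : phi [a] = (a : WithOne S) := by simp [phi]
@[simp] theorem phi_append (l l' : List S) : phi (l ++ l') = phi l * phi l' := by
  simp [phi]
theorem phi_cons (a : S) (l : List S) : phi (a :: l) = (a : WithOne S) * phi l := by
  simp [phi]


theorem FactTreeLe.mono {l : List S} {v : S} {n m : ℕ} (h : FactTreeLe l v n) (hnm : n ≤ m) :
    FactTreeLe l v m := by
  induction h generalizing m with
  | leaf s n => exact .leaf s m
  | node h1 h2 ih1 ih2 =>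
      obtain ⟨m', rfl⟩ : ∃ m', m = m' + 1 := ⟨m - 1, by omega⟩
      exact .node (ih1 (by omega)) (ih2 (by omega))
  | idem he children hlen hch ih =>
      obtain ⟨m', rfl⟩ : ∃ m', m = m' + 1 := ⟨m - 1, by omega⟩
      exact .idem he children hlen (fun l hl => ih l hl (by omega))

theorem phi_flatten_const {c : WithOne S} (hc : c * c = c) :
    ∀ (ls : List (List S)), ls ≠ [] → (∀ l ∈ ls, phi l = c) → phi ls.flatten = c := by
  intro ls
  induction ls with
  | nil => simp
  | cons l rest ih =>
      intro _ hall
      rcases eq_or_ne rest [] with rfl | hne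
      · simpa using hall l (by simp)
      · have h1 : phi rest.flatten = c := ih hne (fun x hx => hall x (by simp [hx]))
        have h2 : phi l = c := hall l (by simp)
        simp [h1, h2, hc]

theorem FactTreeLe.phi_eq {l : List S} {v : S} {n : ℕ} (h : FactTreeLe l v n) :
    phi l = (v : WithOne S) := by
  induction h with
  | leaf s n => simp
  | node h1 h2 ih1 ih2 => simp [ih1, ih2]
  | idem he children hlen hch ih =>
      exact phi_flatten_const (by rw [← WithOne.coe_mul, he]) children
        (by rintro rfl; simp at hlen) ih

theorem FactTreeLe.ne_nil {l : List S} {v : S} {n : ℕ} (h : FactTreeLe l v n) : l ≠ [] := by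
  intro hl
  have h2 := h.phi_eq
  rw [hl, phi_nil] at h2
  exact WithOne.coe_ne_one h2.symm

theorem forall₂_append_split {α β : Type*} {R : α → β → Prop} {l : List α} {l₁ l₂ : List β}
    (h : Forall₂ R l (l₁ ++ l₂)) :
    ∃ a b, l = a ++ b ∧ Forall₂ R a l₁ ∧ Forall₂ R b l₂ :=
  ⟨l.take l₁.length, l.drop l₁.length, (take_append_drop _ _).symm,
    forall₂_take_append _ _ _ h, forall₂_drop_append _ _ _ h⟩

theorem forall₂_flatten_split {α β : Type*} {R : α → β → Prop} :
    ∀ {cs : List (List β)} {l : List α}, Forall₂ R l cs.flatten →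
    ∃ lss, l = lss.flatten ∧ Forall₂ (Forall₂ R) lss cs := by
  intro cs
  induction cs with
  | nil =>
      intro l h
      simp only [flatten_nil] at h
      cases h
      exact ⟨[], by simp⟩
  | cons c cs ih =>
      intro l h
      rw [flatten_cons] at h
      obtain ⟨a, b, rfl, ha, hb⟩ := forall₂_append_split h
      obtain ⟨lss, rfl, hlss⟩ := ih hb
      exact ⟨a :: lss, by simp, Forall₂.cons ha hlss⟩

theorem forall₂_mem_left {α β : Type*} {R : α → β → Prop} :
    ∀ {as : List α} {bs : List β}, Forall₂ R as bs → ∀ a ∈ as, ∃ b ∈ bs, R a b := by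
  intro as bs h
  induction h with
  | nil => simp
  | cons hr _ ih =>
      intro a ha
      rcases ha with _ | ha
      · exact ⟨_, by simp, hr⟩
      · obtain ⟨b, hb, hrb⟩ := ih _ (by assumption)
        exact ⟨b, by simp [hb], hrb⟩

theorem FactTreeLe.graft {h1 : ℕ} {ts : List S} {v : S} {h2 : ℕ} (t : FactTreeLe ts v h2) :
    ∀ {ls : List (List S)}, Forall₂ (fun l (t : S) => FactTreeLe l t h1) ls ts →
    FactTreeLe ls.flatten v (h1 + h2) := by
  induction t with
  | leaf s n =>
      intro ls h
      cases h with
      | cons hr h' =>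
          cases h'
          simpa using hr.mono (by omega)
  | node ta tb iha ihb =>
      intro ls h
      obtain ⟨a, b, rfl, ha, hb⟩ := forall₂_append_split h
      rw [flatten_append]
      exact .node (iha ha) (ihb hb)
  | idem he children hlen hch ih =>
      intro ls h
      obtain ⟨lss, rfl, hlss⟩ := forall₂_flatten_split h
      rw [flatten_flatten]
      refine .idem he (lss.map List.flatten) ?_ ?_
      · rw [length_map, hlss.length_eq]; exact hlen
      · intro l' hl'
        obtain ⟨lg, hlg, rfl⟩ := mem_map.1 hl'
        obtain ⟨c, hc, hQ⟩ := forall₂_mem_left hlss lg hlg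
        exact ih c hc hQ

theorem FactTreeLe.mapHom {T : Type*} [Semigroup T] (f : S →ₙ* T) {l : List S} {v : S} {n : ℕ}
    (h : FactTreeLe l v n) : FactTreeLe (l.map f) (f v) n := by
  induction h with
  | leaf s n => exact .leaf _ _
  | node t1 t2 ih1 ih2 => rw [map_append, map_mul]; exact .node ih1 ih2
  | idem he children hlen hch ih =>
      rw [map_flatten]
      refine .idem (by rw [← map_mul, he]) (children.map (List.map f)) (by simpa using hlen) ?_
      · intro l' hl'
        obtain ⟨c, hc, rfl⟩ := mem_map.1 hl'
        exact ih c hc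
end Trees
section LeftZero
open List SimonAux
variable {S : Type*} [Semigroup S]

theorem splitA : ∀ (n : ℕ) (xs : List S) (a : S) (t : List S), xs.length ≤ n →
    xs = a :: t →
    ∃ bs : List (List S), bs ≠ [] ∧ xs = bs.flatten ∧
      ∀ b ∈ bs, ∃ t', b = a :: t' ∧ a ∉ t' := by
  intro n
  induction n with
  | zero => intro xs a t h he; subst he; simp at h
  | succ n ih =>
      intro xs a t hlen he
      subst he
      classical
      rcases em (a ∈ t) with hmem | hnmem
      · obtain ⟨t1, r2, rfl⟩ := List.append_of_mem hmem
        obtain ⟨bs1, hbs1ne, hbs1e, hbs1⟩ :=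
          ih (a :: t1) a t1 (by simp at hlen ⊢; omega) rfl
        obtain ⟨bs2, hbs2ne, hbs2e, hbs2⟩ :=
          ih (a :: r2) a r2 (by simp at hlen ⊢; omega) rfl
        refine ⟨bs1 ++ bs2, by simp [hbs1ne], ?_, ?_⟩
        · rw [flatten_append, ← hbs1e, ← hbs2e]; simp
        · intro b hb
          rcases mem_append.1 hb with h | h
          exacts [hbs1 b h, hbs2 b h]
      · exact ⟨[a :: t], by simp, by simp, by simp [hnmem]⟩

theorem leftzero_tree : ∀ (n : ℕ) (E : Finset S), E.card ≤ n →
    (∀ x ∈ E, ∀ y ∈ E, x * y = x) →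
    ∀ (xs : List S) (a : S) (t : List S), xs = a :: t → (∀ x ∈ xs, x ∈ E) →
    FactTreeLe xs a (3 * n) := by
  intro n
  induction n with
  | zero =>
      intro E hcard _ xs a t he hmem
      have : a ∈ E := hmem a (by simp [he])
      have : E.Nonempty := ⟨a, this⟩
      have := Finset.card_pos.2 this
      omega
  | succ n ih =>
      intro E hcard hlz xs a t he hmem
      classical
      have haE : a ∈ E := hmem a (by simp [he])
      obtain ⟨bs, hbsne, hbse, hbs⟩ := splitA xs.length xs a t le_rfl he
      have hblock : ∀ b ∈ bs, FactTreeLe b a (3 * n + 1) := by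
        intro b hb
        obtain ⟨t', rfl, hat'⟩ := hbs b hb
        have hsub : ∀ x ∈ t', x ∈ xs := by
          intro x hx
          rw [hbse]
          exact mem_flatten.2 ⟨a :: t', hb, by simp [hx]⟩
        rcases t' with _ | ⟨c, t''⟩
        · exact FactTreeLe.leaf a (3 * n + 1)
        · have hc : FactTreeLe (c :: t'') c (3 * n) := by
            refine ih (E.erase a) ?_ ?_ _ c t'' rfl ?_
            · rw [Finset.card_erase_of_mem haE]; omega
            · intro x hx y hy
              exact hlz x (Finset.mem_of_mem_erase hx) y (Finset.mem_of_mem_erase hy)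
            · intro x hx
              refine Finset.mem_erase.2 ⟨?_, hmem x (hsub x hx)⟩
              rintro rfl; exact hat' hx
          have h2 : a * c = a := hlz a haE c (hmem c (hsub c (by simp)))
          have h3 := FactTreeLe.node (FactTreeLe.leaf a (3*n)) hc
          rw [h2] at h3
          simpa using h3
      rcases bs with _ | ⟨b, bs'⟩
      · exact absurd rfl hbsne
      rcases bs' with _ | ⟨b2, bs''⟩
      · rw [hbse]
        simpa using (hblock b (by simp)).mono (by omega)
      · rw [hbse]
        refine (FactTreeLe.idem (hlz a haE a haE) _ (by simp [List.length_cons]) hblock).mono (by omega)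
end LeftZero
section JSmoothCase
open List SimonAux
variable {S : Type*} [Semigroup S]

instance finiteWithOne [Finite S] : Finite (WithOne S) := by
  have := Fintype.ofFinite S
  exact inferInstanceAs (Finite (Option S))

/-- set of values of nonempty prefixes -/
def Pset (w : List S) : Set (WithOne S) := {m | ∃ π, π ≠ [] ∧ π <+: w ∧ phi π = m}

theorem phi_mem_Pset {w : List S} (hw : w ≠ []) : phi w ∈ Pset w :=
  ⟨w, hw, prefix_refl w, rfl⟩

theorem Pset_finite [Finite S] (w : List S) : (Pset w).Finite := Set.toFinite _

/-- all infix values J-equivalent to the whole value -/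
def JSmooth (w : List S) : Prop :=
  w ≠ [] ∧ ∀ z, z ≠ [] → z <:+: w → eqJ (phi z) (phi w)

theorem JSmooth.infix {w z : List S} (hs : JSmooth w) (hz : z <:+: w) (hne : z ≠ []) :
    JSmooth z := by
  refine ⟨hne, fun y hy hyz => ?_⟩
  exact (hs.2 y hy (hyz.trans hz)).trans (hs.2 z hne hz).symm

theorem skolem_list {α β : Type*} {Q : α → β → Prop} :
    ∀ (bs : List α), (∀ b ∈ bs, ∃ v, Q b v) → ∃ vs, Forall₂ Q bs vs := by
  intro bs
  induction bs with
  | nil => exact fun _ => ⟨[], Forall₂.nil⟩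
  | cons b bs ih =>
      intro h
      obtain ⟨v, hv⟩ := h b (by simp)
      obtain ⟨vs, hvs⟩ := ih (fun x hx => h x (by simp [hx]))
      exact ⟨v :: vs, Forall₂.cons hv hvs⟩

/-- A good block within `w`, with context value `c` and target `p`. -/
def BlockGood (w : List S) (p c : WithOne S) (b : List S) : Prop :=
  b ≠ [] ∧ c * phi b = p ∧
  (∀ k, 0 < k → k < b.length → c * phi (b.take k) ≠ p) ∧
  ∃ pre suf, w = pre ++ (b ++ suf) ∧ phi pre = c

theorem cut : ∀ (n : ℕ) (w pre l : List S), l.length ≤ n → l ≠ [] → w = pre ++ l →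
    ∃ b1 ls, l = (b1 :: ls).flatten ∧
      BlockGood w (phi w) (phi pre) b1 ∧ ∀ b ∈ ls, BlockGood w (phi w) (phi w) b := by
  intro n
  induction n with
  | zero => intro w pre l h hne _; exact absurd (length_eq_zero_iff.mp (by omega)) hne
  | succ n ih =>
      intro w pre l hlen hne hw
      classical
      set p := phi w with hp
      have hfull : phi pre * phi l = p := by rw [hp, hw]; simp
      have hex : ∃ k, (0 < k ∧ k ≤ l.length) ∧ phi pre * phi (l.take k) = p := by
        refine ⟨l.length, ⟨by simpa [length_pos_iff] using hne, le_rfl⟩, by simpa using hfull⟩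
      let K := Nat.find hex
      obtain ⟨⟨hK0, hKlen⟩, hKval⟩ := Nat.find_spec hex
      have hKmin := fun k (hk : k < K) => Nat.find_min hex hk
      set b1 := l.take K with hb1
      set rest := l.drop K with hrest
      have hlb : l = b1 ++ rest := (take_append_drop _ _).symm
      have hb1len : b1.length = K := by
        rw [hb1, length_take]; omega
      have hgood1 : BlockGood w p (phi pre) b1 := by
        refine ⟨?_, hKval, ?_, pre, rest, by rw [hw, hlb], rfl⟩
        · intro h; rw [h] at hb1len; simp at hb1len; omega
        · intro k hk0 hklen hcon
          refine hKmin k (by omega) ⟨⟨hk0, by omega⟩, ?_⟩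
          rwa [take_take, min_eq_left (by omega)] at hcon
      rcases eq_or_ne rest [] with hrnil | hrne
      · exact ⟨b1, [], by simp [hlb, hrnil], hgood1, by simp⟩
      · have hwr : w = (pre ++ b1) ++ rest := by rw [hw, hlb]; simp
        obtain ⟨b2, ls, hfl, hgood2, hgoodrest⟩ :=
          ih w (pre ++ b1) rest (by rw [hrest, length_drop]; omega) hrne hwr
        have hctx : phi (pre ++ b1) = p := by rw [phi_append, hKval]
        rw [hctx] at hgood2
        refine ⟨b1, b2 :: ls, ?_, hgood1, ?_⟩
        · simp only [flatten_cons] at hfl ⊢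
          rw [hlb, hfl]
        · intro b hb
          rcases mem_cons.1 hb with rfl | hb'
          exacts [hgood2, hgoodrest b hb']
end JSmoothCase
section SmoothTree
open List SimonAux
variable {S : Type*} [Semigroup S] [Finite S]

theorem forall₂_mem_right {α β : Type*} {R : α → β → Prop} :
    ∀ {as : List α} {bs : List β}, Forall₂ R as bs → ∀ b ∈ bs, ∃ a ∈ as, R a b := by
  intro as bs h
  induction h with
  | nil => simp
  | cons hr _ ih =>
      intro b hb
      rcases hb with _ | hb
      · exact ⟨_, by simp, hr⟩
      · obtain ⟨a, ha, hra⟩ := ih _ (by assumption)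
        exact ⟨a, by simp [ha], hra⟩

theorem leftzero_tree' {xs : List S} {a : S} {t : List S} (he : xs = a :: t)
    (hlz : ∀ x ∈ xs, ∀ y ∈ xs, x * y = x) : FactTreeLe xs a (3 * Nat.card S) := by
  classical
  have : Fintype S := Fintype.ofFinite S
  refine leftzero_tree (Nat.card S) xs.toFinset ?_ ?_ xs a t he (by simp)
  · rw [Nat.card_eq_fintype_card]; exact Finset.card_le_univ _
  · intro x hx y hy
    exact hlz x (by simpa using hx) y (by simpa using hy)

theorem smooth_tree : ∀ (m : ℕ) (w : List S), JSmooth w → (Pset w).ncard ≤ m →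
    ∃ v : S, FactTreeLe w v (m * (3 * Nat.card S + 2)) := by
  intro m
  induction m using Nat.strong_induction_on with
  | _ m ih =>
  intro w hsm hcard
  classical
  set cS := Nat.card S with hcS
  set K := 3 * cS + 2 with hK
  set p := phi w with hp
  have hpos : 0 < (Pset w).ncard :=
    (Set.ncard_pos (Pset_finite w)).2 ⟨p, phi_mem_Pset hsm.1⟩
  have hm1 : 1 ≤ m := by omega
  obtain ⟨b1, ls, hflat, hg1, hgls⟩ := cut w.length w [] w le_rfl hsm.1 (by simp)
  rw [phi_nil] at hg1
  -- block processor
  have process : ∀ (c : WithOne S) (b : List S), BlockGood w p c b →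
      Set.InjOn (fun x => c * x) (Pset b) →
      ∃ v : S, FactTreeLe b v ((m - 1) * K + 1) ∧ phi b = (v : WithOne S) := by
    rintro c b ⟨hbne, hbval, hbmin, pre, suf, hwps, hprec⟩ hinj
    rcases b.eq_nil_or_concat' with rfl | ⟨u, a, rfl⟩
    · exact absurd rfl hbne
    rcases eq_or_ne u [] with rfl | hune
    · exact ⟨a, (FactTreeLe.leaf a _), by simp⟩
    · have hbinf : (u ++ [a]) <:+: w := ⟨pre, suf, by rw [hwps]; simp⟩
      have huinf : u <:+: w := ((prefix_append u [a]).isInfix).trans hbinf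
      have husm : JSmooth u := hsm.infix huinf hune
      -- measure drops
      have himsub : (fun x => c * x) '' Pset u ⊆ Pset w \ {p} := by
        rintro _ ⟨x, ⟨π, hπne, hπpre, rfl⟩, rfl⟩
        have hπb : π <+: u ++ [a] := hπpre.trans (prefix_append u [a])
        have hπlen : π.length ≤ u.length := hπpre.length_le
        have hπtake : π = (u ++ [a]).take π.length := prefix_iff_eq_take.1 hπb
        constructor
        · refine ⟨pre ++ π, by simp [hπne], ?_, by simp [hprec]⟩
          rw [hwps]
          obtain ⟨r, hr⟩ := hπb.trans (prefix_append (u ++ [a]) suf)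
          exact ⟨r, by rw [append_assoc, hr]⟩
        · simp only [Set.mem_singleton_iff]
          have := hbmin π.length (length_pos_iff.2 hπne)
            (by simp only [length_append, length_cons, length_nil]; omega)
          rw [← hπtake] at this
          exact this
      have hucard : (Pset u).ncard ≤ m - 1 := by
        have h1 : ((fun x => c * x) '' Pset u).ncard = (Pset u).ncard :=
          Set.ncard_image_of_injOn (hinj.mono (by
            rintro x ⟨π, hh1, hh2, hh3⟩
            exact ⟨π, hh1, hh2.trans (prefix_append u [a]), hh3⟩))
        have h2 : ((fun x => c * x) '' Pset u).ncard ≤ (Pset w \ {p}).ncard :=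
          Set.ncard_le_ncard himsub ((Pset_finite w).diff)
        have h3 : (Pset w \ {p}).ncard < (Pset w).ncard :=
          Set.ncard_diff_singleton_lt_of_mem (phi_mem_Pset hsm.1) (Pset_finite w)
        omega
      obtain ⟨vu, hvu⟩ := ih (m - 1) (by omega) u husm hucard
      have := FactTreeLe.node hvu (FactTreeLe.leaf a ((m-1) * K))
      exact ⟨vu * a, this, by simp [hvu.phi_eq]⟩
  -- first block
  have hv1 := process 1 b1 hg1 (by intro x _ y _ h; simpa using h)
  obtain ⟨v1, hv1t, hv1e⟩ := hv1
  -- tail blocks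
  have tailQ : ∀ b ∈ ls, ∃ v : S, FactTreeLe b v ((m-1)*K + 1) ∧
      (∃ q, (v : WithOne S) = q * p) ∧ p * (v : WithOne S) = p := by
    intro b hb
    obtain ⟨hbne, hbval, hbmin, pre, suf, hwps, hprec⟩ := hgls b hb
    have hbinf : b <:+: w := ⟨pre, suf, by rw [hwps]; simp⟩
    have heqJ : eqJ (phi b) p := hsm.2 b hbne hbinf
    have hqex : leL (phi b) p := stabL ⟨p, hbval.symm⟩ heqJ.1
    obtain ⟨q, hq⟩ := hqex
    have hidem : phi b * phi b = phi b := by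
      calc phi b * phi b = (q * p) * phi b := by rw [← hq]
        _ = q * (p * phi b) := mul_assoc _ _ _
        _ = q * p := by rw [hbval]
        _ = phi b := hq.symm
    -- injectivity on Pset b
    have hinj : Set.InjOn (fun x => p * x) (Pset b) := by
      rintro x ⟨π, hπne, hπpre, rfl⟩ y ⟨ρ, hρne, hρpre, rfl⟩ hxy
      simp only at hxy
      have hre : ∀ z, z ≠ [] → z <+: b → phi b * phi z = phi z := by
        intro z hz hzp
        have hzinf : z <:+: w := (hzp.isInfix).trans hbinf
        obtain ⟨zr, hzr⟩ := hzp
        have h1 : leR (phi b) (phi z) := ⟨phi zr, by rw [← hzr, phi_append]⟩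
        have h2 : leJ (phi z) (phi b) := by
          refine leJ.trans ?_ (leL.leJ ⟨p, hbval.symm⟩)
          exact (hsm.2 z hz hzinf).1
        obtain ⟨u', hu'⟩ := stabR h1 h2
        rw [hu', ← mul_assoc, hidem]
      have hx := hre π hπne hπpre
      have hy := hre ρ hρne hρpre
      calc phi π = phi b * phi π := (hx).symm
        _ = q * (p * phi π) := by rw [hq, mul_assoc]
        _ = q * (p * phi ρ) := by rw [hxy]
        _ = phi b * phi ρ := by rw [hq, mul_assoc]
        _ = phi ρ := hy
    obtain ⟨v, hvt, hve⟩ := process p b ⟨hbne, hbval, hbmin, pre, suf, hwps, hprec⟩ hinj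
    refine ⟨v, hvt, ⟨q, by rw [← hve]; exact hq⟩, by rw [← hve]; exact hbval⟩
  obtain ⟨vs, hvs⟩ := skolem_list ls tailQ
  -- left-zero structure on vs
  have hlz : ∀ x ∈ vs, ∀ y ∈ vs, x * y = x := by
    intro x hx y hy
    obtain ⟨_, _, _, ⟨qx, hqx⟩, hpx⟩ := forall₂_mem_right hvs x hx
    obtain ⟨_, _, _, _, hpy⟩ := forall₂_mem_right hvs y hy
    have : ((x * y : S) : WithOne S) = (x : WithOne S) := by
      rw [WithOne.coe_mul, hqx, mul_assoc, hpy]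
    exact WithOne.coe_inj.1 this
  rcases vs with _ | ⟨v0, vs'⟩
  · -- ls = []
    have hlsnil : ls = [] := by cases hvs; rfl
    rw [hflat, hlsnil]
    have h6 : (m - 1 + 1) * K = (m-1)*K + K := Nat.succ_mul _ _
    have h7 : m - 1 + 1 = m := by omega
    rw [h7] at h6
    exact ⟨v1, by simpa using hv1t.mono (by omega)⟩
  · -- ls nonempty
    have hvst : FactTreeLe (v0 :: vs') v0 (3 * cS) := leftzero_tree' rfl hlz
    have htrees : Forall₂ (fun l t => FactTreeLe l t ((m-1)*K + 1)) ls (v0 :: vs') := by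
      refine hvs.imp ?_
      intro a b h
      exact h.1
    have hgraft := hvst.graft htrees
    have hnode := FactTreeLe.node (hv1t.mono (by omega)) hgraft
    rw [hflat, flatten_cons]
    have h6 : (m - 1 + 1) * K = (m-1)*K + K := Nat.succ_mul _ _
    have h7 : m - 1 + 1 = m := by omega
    rw [h7] at h6
    refine ⟨v1 * v0, hnode.mono (by omega)⟩
end SmoothTree
section OneClass
open List SimonAux
variable {S : Type*} [Semigroup S]

theorem leJ_phi_letter {z : List S} {b : S} (hb : b ∈ z) :
    leJ (phi z) (b : WithOne S) := by
  obtain ⟨s, t, rfl⟩ := List.append_of_mem hb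
  exact ⟨phi s, phi t, by rw [phi_append, phi_cons]; simp [mul_assoc]⟩

theorem smooth_of_class {a : S} {z : List S} (hz : z ≠ [])
    (hl : ∀ b ∈ z, eqJ (b : WithOne S) (a : WithOne S))
    (hv : eqJ (phi z) (a : WithOne S)) : JSmooth z := by
  refine ⟨hz, fun y hy hyz => ?_⟩
  have h1 : leJ (phi z) (phi y) := by
    obtain ⟨s, t, hst⟩ := hyz
    exact ⟨phi s, phi t, by rw [← hst]; simp [mul_assoc]⟩
  have h2 : leJ (phi y) (phi z) := by
    obtain ⟨c, y', rfl⟩ := List.exists_cons_of_ne_nil hy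
    have hc : c ∈ z := hyz.subset (by simp)
    have : leJ (phi (c :: y')) (c : WithOne S) := leJ_phi_letter (by simp)
    exact (this.trans (hl c hc).1).trans hv.2
  exact ⟨h2, h1⟩

theorem notclass_of_not_smooth {a : S} {z : List S} (hz : z ≠ [])
    (hl : ∀ b ∈ z, eqJ (b : WithOne S) (a : WithOne S))
    (hns : ¬ JSmooth z) : ¬ eqJ (phi z) (a : WithOne S) :=
  fun hv => hns (smooth_of_class hz hl hv)

theorem singleton_smooth (b : S) : JSmooth [b] := by
  refine ⟨by simp, fun z hz hzi => ?_⟩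
  have := hzi.sublist
  rw [sublist_singleton] at this
  rcases this with rfl | rfl
  · exact absurd rfl hz
  · exact eqJ.refl _

/-- greedy decomposition of a one-class word into smooth blocks -/
theorem gsd {a : S} : ∀ (n : ℕ) (w : List S), w.length ≤ n → w ≠ [] →
    (∀ b ∈ w, eqJ (b : WithOne S) (a : WithOne S)) →
    ∃ ls : List (List S), w = ls.flatten ∧ ls ≠ [] ∧ (∀ l ∈ ls, l ≠ [] ∧ JSmooth l) ∧
      Chain' (fun l l' => ¬ eqJ (phi (l ++ l')) (a : WithOne S)) ls := by
  intro n
  induction n with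
  | zero => intro w h hne _; exact absurd (length_eq_zero_iff.mp (by omega)) hne
  | succ n ih =>
      intro w hlen hne hcl
      classical
      have hP1 : JSmooth (w.take 1) := by
        obtain ⟨c, w', rfl⟩ := List.exists_cons_of_ne_nil hne
        simpa using singleton_smooth c
      set K := Nat.findGreatest (fun k => JSmooth (w.take k)) w.length with hKdef
      have hlp : 1 ≤ w.length := length_pos_iff.2 hne
      have hK1 : 1 ≤ K := Nat.le_findGreatest hlp hP1
      have hKsm : JSmooth (w.take K) :=
        Nat.findGreatest_spec (P := fun k => JSmooth (w.take k)) (m := 1) hlp hP1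
      have hKle : K ≤ w.length := Nat.findGreatest_le _
      set B := w.take K with hB
      set rest := w.drop K with hrest
      have hw : w = B ++ rest := (take_append_drop _ _).symm
      have hBne : B ≠ [] := by
        intro h
        have : B.length = 0 := by rw [h]; rfl
        rw [hB, length_take] at this
        omega
      rcases eq_or_ne rest [] with hrnil | hrne
      · refine ⟨[B], by simp [hw, hrnil], by simp, ?_, List.isChain_singleton _⟩
        intro l hl
        rcases (by simpa using hl : l = B) with rfl
        exact ⟨hBne, hKsm⟩
      · have hrlen : rest.length ≤ n := by
          rw [hrest, length_drop]; omega
        obtain ⟨ls', hfl', hne', hblocks', hchain'⟩ := ih rest hrlen hrne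
          (fun b hb => hcl b (by rw [hw]; exact mem_append_right _ hb))
        obtain ⟨l', tl', rfl⟩ := List.exists_cons_of_ne_nil hne'
        have hl'ne : l' ≠ [] := (hblocks' l' (by simp)).1
        obtain ⟨c, l'', rfl⟩ := List.exists_cons_of_ne_nil hl'ne
        have hcr : rest = c :: (l'' ++ tl'.flatten) := by
          rw [hfl']; simp
        set rest' := l'' ++ tl'.flatten with hrest'
        have hKlt : K < w.length := by
          rcases Nat.lt_or_ge K w.length with h | h
          · exact h
          · exfalso
            have : rest = [] := by rw [hrest]; exact drop_eq_nil_of_le h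
            exact hrne this
        have htake : w.take (K+1) = B ++ [c] := by
          rw [hw, take_append]
          congr 1
          · rw [hB, take_take]; congr 1; omega
          · have : B.length = K := by rw [hB, length_take]; omega
            rw [this, hcr]
            simp
        have hnotsm : ¬ JSmooth (w.take (K+1)) :=
          Nat.findGreatest_is_greatest (P := fun k => JSmooth (w.take k)) (n := w.length)
            (by omega) (by omega)
        have hBc_not : ¬ eqJ (phi (B ++ [c])) (a : WithOne S) := by
          rw [← htake]
          refine notclass_of_not_smooth (by rw [htake]; simp) ?_ hnotsm
          intro b hb
          rw [htake] at hb
          refine hcl b ?_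
          rcases mem_append.1 hb with h | h
          · rw [hw]; exact mem_append_left _ h
          · rw [hw, hcr]
            simp only [mem_singleton] at h
            subst h
            simp
        refine ⟨B :: (c :: l'') :: tl', ?_, by simp, ?_, ?_⟩
        · rw [hw, hfl']; simp
        · intro l hl
          rcases mem_cons.1 hl with rfl | h
          · exact ⟨hBne, hKsm⟩
          · exact hblocks' l h
        · unfold Chain'
          rw [isChain_cons_cons]
          constructor
          · -- ¬ eqJ (phi (B ++ c :: l'')) a
            intro hcon
            apply hBc_not
            have hle1 : leJ (phi (B ++ c :: l'')) (phi (B ++ [c])) := by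
              refine ⟨1, phi l'', ?_⟩
              rw [phi_append, phi_append, phi_cons]
              simp [mul_assoc]
            have hle2 : leJ (phi (B ++ [c])) (a : WithOne S) := by
              obtain ⟨b0, B', hB0⟩ := List.exists_cons_of_ne_nil hBne
              have hmem : b0 ∈ B ++ [c] := by rw [hB0]; simp
              refine (leJ_phi_letter hmem).trans ?_
              exact (hcl b0 (by rw [hw, hB0]; simp)).1
            exact ⟨hle2, hcon.2.trans hle1⟩
          · exact hchain'
end OneClass
section YLemma
open List SimonAux
variable {S : Type*} [Semigroup S]

theorem pairup {α : Type*} {Q : α → α → Prop} : ∀ (n : ℕ) (ls : List α), ls.length ≤ n →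
    Chain' Q ls →
    ∃ (pls : List (List α)) (rest : List α), ls = pls.flatten ++ rest ∧
      (∀ pr ∈ pls, ∃ u v, pr = [u, v] ∧ Q u v) ∧ (rest = [] ∨ ∃ z, rest = [z]) := by
  intro n
  induction n with
  | zero =>
      intro ls h _
      have hnil : ls = [] := length_eq_zero_iff.mp (by omega)
      subst hnil
      exact ⟨[], [], by simp, by simp, by simp⟩
  | succ n ih =>
      intro ls hlen hch
      match ls with
      | [] => exact ⟨[], [], by simp, by simp, by simp⟩
      | [x] => exact ⟨[], [x], by simp, by simp, by simp [exists_eq]⟩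
      | x :: y :: tl =>
          have hQ : Q x y := (isChain_cons_cons.1 hch).1
          have htl : Chain' Q tl := ((isChain_cons_cons.1 hch).2).tail
          obtain ⟨pls, rest, heq, hprs, hrest⟩ := ih tl (by simp at hlen ⊢; omega) htl
          refine ⟨[x, y] :: pls, rest, by simp [heq], ?_, hrest⟩
          intro pr hpr
          rcases mem_cons.1 hpr with rfl | h
          · exact ⟨x, y, rfl, hQ⟩
          · exact hprs pr h

/-- words all of whose letters are J-equivalent to `a` -/
theorem oneclass_tree [Finite S] (a : S) (hI : ℕ)
    (hmain : ∀ xs : List S, xs ≠ [] →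
      (∀ x ∈ xs, leJ (x : WithOne S) (a : WithOne S) ∧ ¬ eqJ (x : WithOne S) (a : WithOne S)) →
      ∃ v, FactTreeLe xs v hI) :
    ∀ w : List S, w ≠ [] → (∀ b ∈ w, eqJ (b : WithOne S) (a : WithOne S)) →
    ∃ v, FactTreeLe w v ((Nat.card S + 1) * (3 * Nat.card S + 2) + hI + 3) := by
  intro w hw hcl
  classical
  set CS := (Nat.card S + 1) * (3 * Nat.card S + 2) with hCS
  obtain ⟨ls, hfl, hlsne, hblocks, hchain⟩ := gsd w.length w le_rfl hw hcl
  -- trees for blocks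
  have hbt : ∀ l ∈ ls, ∃ v : S, FactTreeLe l v CS ∧ phi l = (v : WithOne S) := by
    intro l hl
    have hsm := (hblocks l hl).2
    have hcard : (Pset l).ncard ≤ Nat.card S + 1 := by
      have h1 : (Pset l).ncard ≤ (Set.univ : Set (WithOne S)).ncard :=
        Set.ncard_le_ncard (Set.subset_univ _) Set.finite_univ
      rw [Set.ncard_univ] at h1
      have h2 : Nat.card (WithOne S) = Nat.card S + 1 := by
        have ft := Fintype.ofFinite S
        letI : Fintype (WithOne S) := inferInstanceAs (Fintype (Option S))
        rw [Nat.card_eq_fintype_card, Nat.card_eq_fintype_card]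
        exact Fintype.card_option
      omega
    obtain ⟨v, hv⟩ := smooth_tree (Nat.card S + 1) l hsm hcard
    exact ⟨v, hv, hv.phi_eq⟩
  -- pair up
  obtain ⟨pls, rest, hplseq, hpairs, hrest⟩ := pairup ls.length ls le_rfl hchain
  -- tree for each pair, with value in the "ideal"
  have hpt : ∀ pr ∈ pls, ∃ c : S, FactTreeLe pr.flatten c (CS + 1) ∧
      leJ (c : WithOne S) (a : WithOne S) ∧ ¬ eqJ (c : WithOne S) (a : WithOne S) := by
    intro pr hpr
    obtain ⟨u, v', rfl, hQ⟩ := hpairs pr hpr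
    have hu : u ∈ ls := by rw [hplseq]; exact mem_append_left _ (mem_flatten.2 ⟨_, hpr, by simp⟩)
    have hv' : v' ∈ ls := by rw [hplseq]; exact mem_append_left _ (mem_flatten.2 ⟨_, hpr, by simp⟩)
    obtain ⟨vu, hvut, hvue⟩ := hbt u hu
    obtain ⟨vv, hvvt, hvve⟩ := hbt v' hv'
    have hnode := FactTreeLe.node hvut hvvt
    have hflpr : ([u, v'] : List (List S)).flatten = u ++ v' := by simp
    have huvne : u ++ v' ≠ [] := by
      have := (hblocks u hu).1
      simp [this]
    have hletters : ∀ b ∈ u ++ v', eqJ (b : WithOne S) (a : WithOne S) := by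
      intro b hb
      refine hcl b ?_
      rw [hfl, hplseq]
      refine mem_flatten.2 ?_
      rcases mem_append.1 hb with h | h
      · exact ⟨u, mem_append_left _ (mem_flatten.2 ⟨_, hpr, by simp⟩), h⟩
      · exact ⟨v', mem_append_left _ (mem_flatten.2 ⟨_, hpr, by simp⟩), h⟩
    have hval : phi (u ++ v') = ((vu * vv : S) : WithOne S) := by
      rw [phi_append, hvue, hvve, WithOne.coe_mul]
    refine ⟨vu * vv, by rw [hflpr]; exact hnode, ?_, ?_⟩
    · rw [← hval]
      obtain ⟨b0, u', hu0⟩ := List.exists_cons_of_ne_nil (hblocks u hu).1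
      have hb0 : b0 ∈ u ++ v' := by rw [hu0]; simp
      exact (leJ_phi_letter hb0).trans (hletters b0 hb0).1
    · rw [← hval]
      exact hQ
  obtain ⟨cs, hcs⟩ := skolem_list pls hpt
  -- the rest block's tree (if any)
  rcases hrest with rfl | ⟨z, rfl⟩
  · -- no leftover
    rcases eq_or_ne pls [] with rfl | hplsne
    · rw [hplseq] at hlsne; simp at hlsne
    · have hcsne : cs ≠ [] := by
        intro h; rw [h] at hcs; exact hplsne (by cases hcs; rfl)
      obtain ⟨V, hV⟩ := hmain cs hcsne (by
        intro x hx
        obtain ⟨pr, hpr, h1, h2, h3⟩ := forall₂_mem_right hcs x hx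
        exact ⟨h2, h3⟩)
      have htrees : Forall₂ (fun l t => FactTreeLe l t (CS + 1)) (pls.map List.flatten) cs := by
        rw [forall₂_map_left_iff]
        refine hcs.imp ?_
        intro a b h
        exact h.1
      have hgraft := hV.graft htrees
      refine ⟨V, ?_⟩
      have : w = (pls.map List.flatten).flatten := by
        rw [hfl, hplseq, append_nil, flatten_flatten]
      rw [this]
      exact hgraft.mono (by omega)
  · -- leftover single block z
    have hz : z ∈ ls := by rw [hplseq]; simp
    obtain ⟨vz, hvzt, hvze⟩ := hbt z hz
    rcases eq_or_ne pls [] with rfl | hplsne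
    · refine ⟨vz, ?_⟩
      have : w = z := by rw [hfl, hplseq]; simp
      rw [this]
      exact hvzt.mono (by omega)
    · have hcsne : cs ≠ [] := by
        intro h; rw [h] at hcs; exact hplsne (by cases hcs; rfl)
      obtain ⟨V, hV⟩ := hmain cs hcsne (by
        intro x hx
        obtain ⟨pr, hpr, h1, h2, h3⟩ := forall₂_mem_right hcs x hx
        exact ⟨h2, h3⟩)
      have htrees : Forall₂ (fun l t => FactTreeLe l t (CS + 1)) (pls.map List.flatten) cs := by
        rw [forall₂_map_left_iff]
        refine hcs.imp ?_
        intro a b h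
        exact h.1
      have hgraft := hV.graft htrees
      have hnode := FactTreeLe.node (hgraft.mono (le_refl _)) (hvzt.mono (by omega))
      refine ⟨V * vz, ?_⟩
      have : w = (pls.map List.flatten).flatten ++ z := by
        rw [hfl, hplseq, flatten_append, flatten_flatten]
        simp
      rw [this]
      exact hnode.mono (by omega)
end YLemma
section MainInduction
open List SimonAux

universe u

theorem runs {S : Type u} [Semigroup S] (P : S → Prop) : ∀ (n : ℕ) (w : List S), w.length ≤ n →
    ∃ x₀ zs yl, w = x₀ ++ List.flatten zs ++ yl ∧ (∀ b ∈ x₀, ¬ P b) ∧ (∀ b ∈ yl, P b) ∧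
      (∀ z ∈ zs, ∃ y x, z = y ++ x ∧ y ≠ [] ∧ x ≠ [] ∧ (∀ b ∈ y, P b) ∧ (∀ b ∈ x, ¬ P b)) := by
  intro n
  induction n with
  | zero =>
      intro w h
      have : w = [] := length_eq_zero_iff.mp (by omega)
      subst this
      exact ⟨[], [], [], by simp, by simp, by simp, by simp⟩
  | succ n ih =>
      intro w hlen
      match w with
      | [] => exact ⟨[], [], [], by simp, by simp, by simp, by simp⟩
      | b :: w' =>
          obtain ⟨x₀, zs, yl, heq, hx₀, hyl, hzs⟩ := ih w' (by simp at hlen; omega)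
          rcases Classical.em (P b) with hPb | hPb
          · rcases eq_or_ne x₀ [] with rfl | hx₀ne
            · rcases zs with _ | ⟨z, ztl⟩
              · refine ⟨[], [], b :: yl, by simp [heq], by simp, ?_, by simp⟩
                intro c hc
                rcases mem_cons.1 hc with rfl | h
                exacts [hPb, hyl c h]
              · obtain ⟨y, x, hzyx, hyne, hxne, hy, hx⟩ := hzs z (by simp)
                refine ⟨[], (b :: z) :: ztl, yl, ?_, by simp, hyl, ?_⟩
                · rw [heq]; simp
                · intro z' hz'
                  rcases mem_cons.1 hz' with rfl | h
                  · refine ⟨b :: y, x, by rw [hzyx]; simp, by simp, hxne, ?_, hx⟩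
                    intro c hc
                    rcases mem_cons.1 hc with rfl | h
                    exacts [hPb, hy c h]
                  · exact hzs z' (by simp [h])
            · refine ⟨[], (b :: x₀) :: zs, yl, ?_, by simp, hyl, ?_⟩
              · rw [heq]; simp
              · intro z' hz'
                rcases mem_cons.1 hz' with rfl | h
                · exact ⟨[b], x₀, by simp, by simp, hx₀ne, by simpa using hPb, hx₀⟩
                · exact hzs z' h
          · exact ⟨b :: x₀, zs, yl, by rw [heq]; simp, by
              intro c hc
              rcases mem_cons.1 hc with rfl | h
              exacts [hPb, hx₀ c h], hyl, hzs⟩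

theorem exists_max_letter {S : Type u} [Semigroup S] [Finite S] (w : List S) (hw : w ≠ []) :
    ∃ a ∈ w, ∀ b ∈ w, leJ (a : WithOne S) (b : WithOne S) →
      eqJ (b : WithOne S) (a : WithOne S) := by
  classical
  set r : S → ℕ := fun x => ({y : WithOne S | leJ (x : WithOne S) y}).ncard with hr
  obtain ⟨b0, w', rfl⟩ := List.exists_cons_of_ne_nil hw
  obtain ⟨a, haw, hmin⟩ := Finset.exists_min_image (b0 :: w').toFinset r ⟨b0, by simp⟩
  refine ⟨a, by simpa using haw, ?_⟩
  intro b hb hab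
  have hsub : {y : WithOne S | leJ (b : WithOne S) y} ⊆ {y | leJ (a : WithOne S) y} :=
    fun y hy => hab.trans hy
  have hcard : r a ≤ r b := hmin b (by simpa using hb)
  have hequ : {y : WithOne S | leJ (b : WithOne S) y} = {y | leJ (a : WithOne S) y} :=
    Set.eq_of_subset_of_ncard_le hsub hcard (Set.toFinite _)
  have : (a : WithOne S) ∈ {y : WithOne S | leJ (b : WithOne S) y} := by
    rw [hequ]; exact leJ.refl _
  exact ⟨this, hab⟩

def Ival {S : Type u} [Semigroup S] (a x : S) : Prop :=
  leJ (x : WithOne S) (a : WithOne S) ∧ ¬ eqJ (x : WithOne S) (a : WithOne S)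

def Isub {S : Type u} [Semigroup S] (a : S) : Type u := {x : S // Ival a x}

theorem Ival.mul {S : Type u} [Semigroup S] {a x y : S} (hx : Ival a x) (_ : Ival a y) :
    Ival a (x * y) := by
  constructor
  · refine leJ.trans ?_ hx.1
    rw [WithOne.coe_mul]
    exact (mul_leR _ _).leJ
  · intro h
    refine hx.2 ⟨hx.1, ?_⟩
    refine h.2.trans ?_
    rw [WithOne.coe_mul]
    exact (mul_leR _ _).leJ

instance {S : Type u} [Semigroup S] (a : S) : Mul (Isub a) :=
  ⟨fun x y => ⟨x.1 * y.1, x.2.mul y.2⟩⟩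

instance {S : Type u} [Semigroup S] (a : S) : Semigroup (Isub a) :=
  ⟨fun x y z => Subtype.ext (mul_assoc x.1 y.1 z.1)⟩

instance {S : Type u} [Semigroup S] [Finite S] (a : S) : Finite (Isub a) :=
  inferInstanceAs (Finite {x : S // Ival a x})

def IsubHom {S : Type u} [Semigroup S] (a : S) : Isub a →ₙ* S :=
  ⟨Subtype.val, fun _ _ => rfl⟩

theorem Isub_card_lt {S : Type u} [Semigroup S] [Finite S] (a : S) :
    Nat.card (Isub a) < Nat.card S := by
  classical
  have ft := Fintype.ofFinite S
  have hna : ¬ Ival a a := fun h => h.2 (eqJ.refl _)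
  have h1 : Fintype.card {x : S // Ival a x} < Fintype.card S :=
    Fintype.card_subtype_lt (x := a) hna
  have h2 : Nat.card (Isub a) = Fintype.card {x : S // Ival a x} := by
    rw [← Nat.card_eq_fintype_card]
    rfl
  rw [h2, Nat.card_eq_fintype_card]
  exact h1

theorem list_lift {S : Type u} {P : S → Prop} :
    ∀ (xs : List S), (∀ x ∈ xs, P x) → ∃ xs' : List {x // P x}, xs'.map Subtype.val = xs := by
  intro xs
  induction xs with
  | nil => exact fun _ => ⟨[], rfl⟩
  | cons x xs ih =>
      intro h
      obtain ⟨xs', hxs'⟩ := ih (fun y hy => h y (by simp [hy]))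
      exact ⟨⟨x, h x (by simp)⟩ :: xs', by simp [hxs']⟩

def CCB (n : ℕ) : ℕ := (n + 1) * (3 * n + 2)

def HBF : ℕ → ℕ
  | 0 => 0
  | n+1 => (CCB (n+1) + HBF n + 10) * (2 * (n+1) + 1)

theorem simon_main : ∀ (n : ℕ) (S : Type u) [Semigroup S] [Finite S], Nat.card S ≤ n →
    ∀ l : List S, l ≠ [] → ∃ v : S, FactTreeLe l v (HBF n) := by
  intro n
  induction n with
  | zero =>
      intro S _ _ hcard l hl
      obtain ⟨b, l', rfl⟩ := List.exists_cons_of_ne_nil hl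
      have : Nonempty S := ⟨b⟩
      have := Nat.card_pos (α := S)
      omega
  | succ n ihn =>
      intro S instS instF hcard l hl
      classical
      set KK := CCB (n+1) + HBF n + 10 with hKK
      suffices claim : ∀ (j : ℕ) (w : List S), w ≠ [] → w.toFinset.card ≤ j →
          ∃ v, FactTreeLe w v (KK * (2 * j + 1)) by
        have ft := Fintype.ofFinite S
        obtain ⟨v, hv⟩ := claim (n+1) l hl (by
          have h1 : l.toFinset.card ≤ Fintype.card S := Finset.card_le_univ _
          rw [← Nat.card_eq_fintype_card] at h1; omega)
        refine ⟨v, ?_⟩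
        have hEq : HBF (n+1) = KK * (2*(n+1)+1) := by rw [hKK]; rfl
        rw [hEq]; exact hv
      intro j
      induction j with
      | zero =>
          intro w hw hc
          obtain ⟨b, w', rfl⟩ := List.exists_cons_of_ne_nil hw
          have : b ∈ (b :: w').toFinset := by simp
          have := Finset.card_pos.2 ⟨b, this⟩
          omega
      | succ j ihj =>
          intro w hw hc
          obtain ⟨a, haw, hamax⟩ := exists_max_letter w hw
          -- the ideal-word machine
          have hIm : ∀ xs : List S, xs ≠ [] →
              (∀ x ∈ xs, leJ (x : WithOne S) (a : WithOne S) ∧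
                ¬ eqJ (x : WithOne S) (a : WithOne S)) →
              ∃ v, FactTreeLe xs v (HBF n) := by
            intro xs hxs hmem
            obtain ⟨xs', hxs'⟩ := list_lift (P := Ival a) xs hmem
            have hxs'ne : xs' ≠ [] := by
              rintro rfl
              exact hxs (by simpa using hxs'.symm)
            have hcard' : Nat.card (Isub a) ≤ n := by
              have := Isub_card_lt a
              omega
            obtain ⟨v, hv⟩ := ihn (Isub a) hcard' xs' hxs'ne
            refine ⟨v.1, ?_⟩
            have hmap := FactTreeLe.mapHom (IsubHom a) hv
            have hcoe : (xs'.map (IsubHom a) : List S) = xs := by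
              rw [show ((IsubHom a : Isub a →ₙ* S) : Isub a → S) = Subtype.val from rfl]; exact hxs'
            rwa [hcoe] at hmap
          -- Y-lemma height
          set CSY := (Nat.card S + 1) * (3 * Nat.card S + 2) + HBF n + 3 with hCSY
          have hCSYKK : CSY ≤ KK := by
            have h1 : (Nat.card S + 1) * (3 * Nat.card S + 2) ≤ CCB (n+1) := by
              rw [CCB]
              exact Nat.mul_le_mul (by omega) (by omega)
            omega
          -- decompose into runs
          obtain ⟨x₀, zs, yl, heq, hx₀, hyl, hzs⟩ :=
            runs (S := S) (fun b : S => eqJ (b : WithOne S) (a : WithOne S)) w.length w le_rfl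
          have hx₀w : ∀ b ∈ x₀, b ∈ w := by
            intro b hb; rw [heq]; simp [hb]
          have hylw : ∀ b ∈ yl, b ∈ w := by
            intro b hb; rw [heq]; simp [hb]
          have hzsw : ∀ z ∈ zs, ∀ b ∈ z, b ∈ w := by
            intro z hz b hb
            rw [heq]
            refine mem_append_left _ (mem_append_right _ ?_)
            exact mem_flatten.2 ⟨z, hz, hb⟩
          -- inner-IH for non-class words
          have hsmall : ∀ (xl : List S), xl ≠ [] → (∀ b ∈ xl, b ∈ w) →
              (∀ b ∈ xl, ¬ eqJ (b : WithOne S) (a : WithOne S)) →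
              ∃ v, FactTreeLe xl v (KK * (2 * j + 1)) := by
            intro xl hne hsub hnc
            refine ihj xl hne ?_
            have hsubF : xl.toFinset ⊆ w.toFinset.erase a := by
              intro x hx
              rw [mem_toFinset] at hx
              refine Finset.mem_erase.2 ⟨?_, mem_toFinset.2 (hsub x hx)⟩
              rintro rfl
              exact hnc x hx (eqJ.refl _)
            have h1 := Finset.card_le_card hsubF
            rw [Finset.card_erase_of_mem (mem_toFinset.2 haw)] at h1
            omega
          -- tree for a pure-class word
          have hY : ∀ (y : List S), y ≠ [] →
              (∀ b ∈ y, eqJ (b : WithOne S) (a : WithOne S)) →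
              ∃ v, FactTreeLe y v CSY := by
            intro y hne hcls
            rw [hCSY]
            exact oneclass_tree a (HBF n) hIm y hne hcls
          -- per-block trees for zs
          set Hb0 := KK * (2 * j + 1) + KK with hHb0
          have hCSYHb0 : CSY ≤ Hb0 := by omega
          have hIHHb0 : KK * (2 * j + 1) ≤ Hb0 := by omega
          have hblockt : ∀ z ∈ zs, ∃ c : S, FactTreeLe z c (Hb0 + 1) ∧
              leJ (c : WithOne S) (a : WithOne S) ∧
              ¬ eqJ (c : WithOne S) (a : WithOne S) := by
            intro z hz
            obtain ⟨y, x, rfl, hyne, hxne, hy, hx⟩ := hzs z hz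
            obtain ⟨vy, hvy⟩ := hY y hyne hy
            obtain ⟨vx, hvx⟩ := hsmall x hxne
              (fun b hb => hzsw _ hz b (mem_append_right _ hb)) hx
            have hnode := FactTreeLe.node (hvy.mono hCSYHb0) (hvx.mono hIHHb0)
            refine ⟨vy * vx, hnode, ?_, ?_⟩
            · have hval : phi (y ++ x) = ((vy * vx : S) : WithOne S) := hnode.phi_eq
              rw [← hval]
              obtain ⟨b0, y', hy0⟩ := List.exists_cons_of_ne_nil hyne
              have hb0 : b0 ∈ y ++ x := by rw [hy0]; simp
              exact (leJ_phi_letter hb0).trans (hy b0 (by rw [hy0]; simp)).1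
            · intro hcon
              have hval : phi (y ++ x) = ((vy * vx : S) : WithOne S) := hnode.phi_eq
              rw [← hval] at hcon
              obtain ⟨b0, x', hx0⟩ := List.exists_cons_of_ne_nil hxne
              have hb0 : b0 ∈ y ++ x := by rw [hx0]; simp
              have h1 : leJ (phi (y ++ x)) (b0 : WithOne S) := leJ_phi_letter hb0
              have h2 : leJ (a : WithOne S) (b0 : WithOne S) := hcon.2.trans h1
              have h3 := hamax b0 (hzsw _ hz b0 hb0) h2
              exact hx b0 (by rw [hx0]; simp) h3
          -- tree for flatten zs (if nonempty)
          have hmid : zs ≠ [] → ∃ v, FactTreeLe zs.flatten v (Hb0 + 1 + HBF n) := by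
            intro hzsne
            obtain ⟨cs, hcs⟩ := skolem_list zs hblockt
            have hcsne : cs ≠ [] := by
              rintro rfl
              exact hzsne (by cases hcs; rfl)
            obtain ⟨V, hV⟩ := hIm cs hcsne (by
              intro x hx
              obtain ⟨z, hz, h1, h2, h3⟩ := forall₂_mem_right hcs x hx
              exact ⟨h2, h3⟩)
            have htrees : Forall₂ (fun l t => FactTreeLe l t (Hb0 + 1)) zs cs := by
              refine hcs.imp ?_
              intro p q h
              exact h.1
            have := hV.graft htrees
            exact ⟨V, this.mono (by omega)⟩
          -- now combine the three parts
          set HT := Hb0 + 1 + HBF n with hHT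
          have harith : KK * (2*(j+1)+1) = KK * (2*j+1) + 2*KK := by ring
          have hHTfinal : HT + 2 ≤ KK * (2*(j+1)+1) := by
            rw [harith]
            omega
          -- trees for the three parts, as options
          have hx₀t : x₀ ≠ [] → ∃ v, FactTreeLe x₀ v HT := by
            intro hne
            obtain ⟨v, hv⟩ := hsmall x₀ hne hx₀w hx₀
            exact ⟨v, hv.mono (by omega)⟩
          have hylt : yl ≠ [] → ∃ v, FactTreeLe yl v HT := by
            intro hne
            obtain ⟨v, hv⟩ := hY yl hne hyl
            exact ⟨v, hv.mono (by omega)⟩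
          have hmid' : zs.flatten ≠ [] → ∃ v, FactTreeLe zs.flatten v HT := by
            intro hne
            have hzsne : zs ≠ [] := by rintro rfl; simp at hne
            exact hmid hzsne
          -- case analysis
          rw [heq]
          rcases eq_or_ne x₀ [] with rfl | hx₀ne <;>
            rcases eq_or_ne zs.flatten [] with hfz | hfz <;>
            rcases eq_or_ne yl [] with rfl | hylne
          · exact absurd (by rw [heq, hfz]; simp) hw
          · obtain ⟨v, hv⟩ := hylt hylne
            exact ⟨v, by rw [hfz]; simpa using hv.mono (by omega)⟩
          · obtain ⟨v, hv⟩ := hmid' hfz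
            exact ⟨v, by simpa using hv.mono (by omega)⟩
          · obtain ⟨v1, hv1⟩ := hmid' hfz
            obtain ⟨v2, hv2⟩ := hylt hylne
            refine ⟨v1 * v2, ?_⟩
            have := FactTreeLe.node hv1 hv2
            simpa using this.mono (by omega)
          · obtain ⟨v, hv⟩ := hx₀t hx₀ne
            exact ⟨v, by rw [hfz]; simpa using hv.mono (by omega)⟩
          · obtain ⟨v1, hv1⟩ := hx₀t hx₀ne
            obtain ⟨v2, hv2⟩ := hylt hylne
            refine ⟨v1 * v2, ?_⟩
            rw [hfz]
            simpa using (FactTreeLe.node hv1 hv2).mono (by omega)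
          · obtain ⟨v1, hv1⟩ := hx₀t hx₀ne
            obtain ⟨v2, hv2⟩ := hmid' hfz
            refine ⟨v1 * v2, ?_⟩
            have := FactTreeLe.node hv1 hv2
            simpa using this.mono (by omega)
          · obtain ⟨v1, hv1⟩ := hx₀t hx₀ne
            obtain ⟨v2, hv2⟩ := hmid' hfz
            obtain ⟨v3, hv3⟩ := hylt hylne
            refine ⟨v1 * v2 * v3, ?_⟩
            have h12 := FactTreeLe.node hv1 hv2
            have := FactTreeLe.node h12 (hv3.mono (by omega))
            simpa [append_assoc] using this.mono (by omega)
end MainInduction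

/-- Simon's factorization forest theorem: for every finite semigroup `S` there is a bound
`h` such that every nonempty sequence over `S` admits a factorization tree of height at
most `h` in which every internal node is binary or idempotent. -/
theorem stmt_15 {S : Type*} [Semigroup S] [Finite S] :
    ∃ h : ℕ, ∀ l : List S, l ≠ [] → ∃ v : S, FactTreeLe l v h := by
  exact ⟨HBF (Nat.card S), fun l hl => simon_main (Nat.card S) S le_rfl l hl⟩
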